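/- Let P, Q, R ∈ K[ζ] and define d₀ = −(1/4)·(coefficient of ζ^g in Q), v₀ = (1/(4 d₀))·(coefficient of ζ^{g-1} in Q), with d₀ ≠ 0. Define P̃, Q̃, R̃ by R̃ = −Q/(4 d₀), P̃ = −P + 2(ζ + v₀) R̃, and Q̃ = −2[(ζ + v₀)(P̃ − P) + 2 d₀ R]. Then the 2×2 discrete Lax equation L·M = M·L̃ holds, where L = [[P, R],[Q, −P]], L̃ = [[P̃, R̃],[Q̃, −P̃]], and M = [[ζ + v₀, 1/2],[−2 d₀, 0]]. Moreover P̃² + Q̃ R̃ = P² + Q R. -/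

import Mathlib

open Polynomial

/-- The transformation (6.8) of the paper: given `P` monic of degree `g+1`, `R` monic of
degree `g`, `Q` of degree `g` with leading coefficient `−4d₀ ≠ 0`, set
`v₀ = (1/(4d₀))·(coeff of ζ^{g-1} in Q)`, `R̃ = −Q/(4d₀)`, `P̃ = −P + 2(ζ + v₀)R̃`,
`Q̃ = −2[(ζ + v₀)(P̃ − P) + 2d₀ R]`. Then the discrete Lax equation `L·M = M·L̃` holds
with `M = [[ζ + v₀, 1/2],[−2d₀, 0]]`, and `P̃² + Q̃ R̃ = P² + Q R`. -/
theorem poisson_map_lax {K : Type*} [Field K] (htwo : (2 : K) ≠ 0) (g : ℕ) (hg : 1 ≤ g)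
    (P Q R : K[X]) (hP : P.Monic) (hPdeg : P.natDegree = g + 1)
    (hR : R.Monic) (hRdeg : R.natDegree = g) (hQdeg : Q.natDegree = g)
    (d0 : K) (hd0 : d0 ≠ 0) (hQlead : Q.coeff g = -4 * d0)
    (v0 : K) (hv0 : v0 = (1 / (4 * d0)) * Q.coeff (g - 1))
    (R' P' Q' : K[X])
    (hR' : R' = C (-(1 / (4 * d0))) * Q)
    (hP' : P' = -P + 2 * (X + C v0) * R')
    (hQ' : Q' = -2 * ((X + C v0) * (P' - P) + C (2 * d0) * R)) :
    (Matrix.of ![![P, R], ![Q, -P]]) *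
        (Matrix.of ![![X + C v0, C (1 / 2)], ![C (-2 * d0), 0]]) =
      (Matrix.of ![![X + C v0, C (1 / 2)], ![C (-2 * d0), 0]]) *
        (Matrix.of ![![P', R'], ![Q', -P']]) ∧
      P' ^ 2 + Q' * R' = P ^ 2 + Q * R := by

  have h4 : (4 : K) ≠ 0 := by
    have := mul_ne_zero htwo htwo
    rwa [show (2:K) * 2 = 4 by norm_num] at this
  have key : (-(1 / (4 * d0)) * d0 * 4 : K) = -1 := by field_simp
  have key2 : ((1:K) / 2) * 2 = 1 := by field_simp
  have hA : (C (-(1 / (4 * d0))) * C d0 * 4 : K[X]) = -1 := by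
    rw [← map_ofNat (C : K →+* K[X]) 4, ← C_mul, ← C_mul, key, map_neg, C_1]
  have hB : (C ((1:K) / 2) * 2 : K[X]) = 1 := by
    rw [← map_ofNat (C : K →+* K[X]) 2, ← C_mul, key2, C_1]
  have hC2 : (C (-2 * d0) : K[X]) = -(2 * C d0) := by
    rw [C_mul, map_neg, map_ofNat]; ring
  have hC2' : (C (2 * d0) : K[X]) = 2 * C d0 := by rw [C_mul, map_ofNat]
  subst hQ' hP' hR'
  rw [hC2, hC2']
  refine ⟨Matrix.ext fun i j => ?_, ?_⟩
  · fin_cases i <;> fin_cases j <;>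
      simp only [Matrix.mul_apply, Fin.sum_univ_two, Matrix.of_apply,
        Matrix.cons_val', Matrix.cons_val_zero, Matrix.cons_val_one,
        Matrix.head_cons, Matrix.empty_val', Matrix.cons_val_fin_one,
        Matrix.head_fin_const, Fin.mk_zero, Fin.mk_one]
    · linear_combination (-2*(X+C v0)*P + 2*(X+C v0)^2*C (-(1/(4*d0)))*Q + 2*C d0*R) * hB
    · linear_combination ((X + C v0) * C (-(1/(4*d0))) * Q) * hB
    · linear_combination (X + C v0) * Q * hA
    · linear_combination C ((1:K)/2) * Q * hA - 2 * C (-(1/(4*d0))) * C d0 * Q * hB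
  · linear_combination (-(Q*R)) * hA
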